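/- Let 0 < a < b be integers with gcd(a, b) = 1 and A = {0, a, b}. Then for every h ≥ 1, |hA| = C(h+2, 2) - C(max(h+2-b, 0), 2). -/

import Mathlib

open Pointwise Finset

/-- The `h`-fold sumset of a finite set `A`. -/
def hfold {G : Type*} [AddCommMonoid G] [DecidableEq G] : ℕ → Finset G → Finset G
  | 0, _ => {0}
  | n + 1, A => hfold n A + A

/-- The `h`-fold restricted sumset of a finite set `A`: sums of `h` distinct elements. -/
def rfold {G : Type*} [AddCommMonoid G] [DecidableEq G] (h : ℕ) (A : Finset G) : Finset G :=
  (A.powersetCard h).image (fun S => S.sum id)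

namespace Stmt16Aux

def P (h : ℕ) : Finset (ℕ × ℕ) :=
  ((Finset.range (h+1)) ×ˢ (Finset.range (h+1))).filter (fun p => p.1 + p.2 ≤ h)

lemma mem_P {h : ℕ} {p : ℕ × ℕ} : p ∈ P h ↔ p.1 + p.2 ≤ h := by
  simp only [P, Finset.mem_filter, Finset.mem_product, Finset.mem_range]
  omega

lemma card_P (h : ℕ) : (P h).card = (h+2).choose 2 := by
  induction h with
  | zero => decide
  | succ n ih =>
    have hdisj : Disjoint (P n) (Finset.HasAntidiagonal.antidiagonal (n+1)) := by
      rw [Finset.disjoint_left]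
      intro p hp hp'
      rw [mem_P] at hp
      rw [Finset.HasAntidiagonal.mem_antidiagonal] at hp'
      omega
    have hunion : P (n+1) = (P n).disjUnion (Finset.HasAntidiagonal.antidiagonal (n+1)) hdisj := by
      ext p
      rw [Finset.mem_disjUnion, mem_P, mem_P, Finset.HasAntidiagonal.mem_antidiagonal]
      omega
    rw [hunion, Finset.card_disjUnion, ih, Finset.Nat.card_antidiagonal]
    rw [show n+1+2 = (n+2)+1 from rfl, Nat.choose_succ_succ (n+2) 1]
    simp [Nat.choose_one_right]
    omega

lemma hfold_eq (a b : ℤ) (h : ℕ) :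
    hfold h ({0, a, b} : Finset ℤ)
      = (P h).image (fun p => (p.1 : ℤ) * a + (p.2 : ℤ) * b) := by
  induction h with
  | zero =>
    have hP0 : P 0 = {(0,0)} := by decide
    simp [hfold, hP0]
  | succ n ih =>
    rw [show hfold (n+1) ({0, a, b} : Finset ℤ)
          = hfold n ({0, a, b} : Finset ℤ) + ({0, a, b} : Finset ℤ) from rfl, ih]
    ext x
    simp only [Finset.mem_add, Finset.mem_image, mem_P, Finset.mem_insert,
      Finset.mem_singleton, Prod.exists]
    constructor
    · rintro ⟨y, ⟨i, j, hij, rfl⟩, z, hz, rfl⟩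
      rcases hz with rfl | rfl | rfl
      · exact ⟨i, j, by omega, by ring⟩
      · exact ⟨i+1, j, by omega, by push_cast; ring⟩
      · exact ⟨i, j+1, by omega, by push_cast; ring⟩
    · rintro ⟨i, j, hij, rfl⟩
      rcases Nat.lt_or_ge (i+j) (n+1) with hlt | hge
      · exact ⟨_, ⟨i, j, by omega, rfl⟩, 0, Or.inl rfl, by ring⟩
      · rcases Nat.eq_zero_or_pos i with rfl | hi
        · refine ⟨_, ⟨0, j-1, by omega, rfl⟩, b, Or.inr (Or.inr rfl), ?_⟩
          have hj : ((j-1 : ℕ) : ℤ) = (j : ℤ) - 1 := by omega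
          rw [hj]; ring
        · refine ⟨_, ⟨i-1, j, by omega, rfl⟩, a, Or.inr (Or.inl rfl), ?_⟩
          have hi' : ((i-1 : ℕ) : ℤ) = (i : ℤ) - 1 := by omega
          rw [hi']; ring

lemma reduce (a b : ℤ) (ha : 0 < a) (hab : a < b) (h : ℕ) :
    ∀ i j : ℕ, i + j ≤ h → ∃ i' j' : ℕ, i' < b.toNat ∧ i' + j' ≤ h ∧
      (i' : ℤ) * a + (j' : ℤ) * b = (i : ℤ) * a + (j : ℤ) * b := by
  have han : (a.toNat : ℤ) = a := Int.toNat_of_nonneg ha.le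
  have hbn : (b.toNat : ℤ) = b := Int.toNat_of_nonneg (by omega)
  intro i
  induction i using Nat.strong_induction_on with
  | _ i ih =>
    intro j hij
    by_cases hib : i < b.toNat
    · exact ⟨i, j, hib, hij, rfl⟩
    · push_neg at hib
      have hb0 : 0 < b.toNat := by omega
      obtain ⟨i', j', h1, h2, h3⟩ :=
        ih (i - b.toNat) (by omega) (j + a.toNat) (by omega)
      refine ⟨i', j', h1, h2, ?_⟩
      have e1 : ((i - b.toNat : ℕ) : ℤ) = (i : ℤ) - b := by omega
      have e2 : ((j + a.toNat : ℕ) : ℤ) = (j : ℤ) + a := by omega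
      rw [h3, e1, e2]; ring

end Stmt16Aux

open Stmt16Aux in
theorem stmt16 (a b : ℤ) (ha : 0 < a) (hab : a < b) (hgcd : Int.gcd a b = 1)
    (h : ℕ) (hh : 1 ≤ h) :
    (hfold h ({0, a, b} : Finset ℤ)).card
      = (h + 2).choose 2 - ((h : ℤ) + 2 - b).toNat.choose 2 := by
  have hb : 0 < b := ha.trans hab
  have hbnb : (b.toNat : ℤ) = b := Int.toNat_of_nonneg hb.le
  set bn := b.toNat with hbndef
  set f : ℕ × ℕ → ℤ := fun p => (p.1 : ℤ) * a + (p.2 : ℤ) * b with hf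
  set Q := (P h).filter (fun p => p.1 < bn) with hQ
  -- the image can be restricted to canonical representatives
  have himg : (P h).image f = Q.image f := by
    apply Finset.Subset.antisymm
    · intro x hx
      simp only [Finset.mem_image, Prod.exists] at hx ⊢
      obtain ⟨i, j, hp, rfl⟩ := hx
      rw [mem_P] at hp
      obtain ⟨i', j', h1, h2, h3⟩ := reduce a b ha hab h i j hp
      refine ⟨i', j', ?_, h3⟩
      rw [hQ, Finset.mem_filter, mem_P]
      exact ⟨h2, h1⟩
    · exact Finset.image_subset_image (Finset.filter_subset _ _)
  -- injectivity on canonical representatives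
  have hinj : Set.InjOn f (Q : Set (ℕ × ℕ)) := by
    rintro ⟨i, j⟩ hp ⟨i', j'⟩ hq hfe
    simp only [hQ, Finset.coe_filter, Set.mem_setOf_eq, mem_P] at hp hq
    have heq : ((i : ℤ) - i') * a = ((j' : ℤ) - j) * b := by
      simp only [hf] at hfe; linarith [hfe]
    have hcop : IsCoprime b a := (Int.isCoprime_iff_gcd_eq_one.mpr hgcd).symm
    have hdvd : b ∣ ((i : ℤ) - i') := by
      refine hcop.dvd_of_dvd_mul_right ?_
      exact ⟨(j' : ℤ) - j, by linarith [heq]⟩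
    have hzero : (i : ℤ) - i' = 0 := by
      refine Int.eq_zero_of_dvd_of_natAbs_lt_natAbs hdvd ?_
      omega
    have hii : i = i' := by omega
    subst hii
    have hjj : ((j : ℤ) - j') * b = 0 := by
      simp only [hf] at hfe; linarith [hfe]
    have : (j : ℤ) - j' = 0 := by
      rcases mul_eq_zero.mp hjj with h' | h'
      · exact h'
      · omega
    have : j = j' := by omega
    simp [this]
  -- counting
  have hsplit := Finset.card_filter_add_card_filter_not
    (s := P h) (p := fun p => p.1 < bn)
  have hcomp : ((P h).filter (fun p => ¬ p.1 < bn)).card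
      = ((h : ℤ) + 2 - b).toNat.choose 2 := by
    by_cases hcase : h < bn
    · have hempty : (P h).filter (fun p => ¬ p.1 < bn) = ∅ := by
        rw [Finset.filter_eq_empty_iff]
        intro p hp
        rw [mem_P] at hp
        omega
      rw [hempty, Finset.card_empty]
      have : ((h : ℤ) + 2 - b).toNat < 2 := by omega
      exact (Nat.choose_eq_zero_of_lt this).symm
    · push_neg at hcase
      have himg2 : (P h).filter (fun p => ¬ p.1 < bn)
          = (P (h - bn)).image (fun p => (p.1 + bn, p.2)) := by
        ext ⟨i, j⟩
        simp only [Finset.mem_filter, mem_P, Finset.mem_image, mem_P, Prod.mk.injEq,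
          Prod.exists]
        constructor
        · rintro ⟨h1, h2⟩
          exact ⟨i - bn, j, by omega, by omega, by omega⟩
        · rintro ⟨x, y, hxy, hx, hy⟩
          omega
      rw [himg2, Finset.card_image_of_injective _ (by
        intro p q hpq
        simp only [Prod.mk.injEq] at hpq
        exact Prod.ext (by omega) hpq.2), card_P]
      congr 1
      omega
  have key : Q.card = (h + 2).choose 2 - ((h : ℤ) + 2 - b).toNat.choose 2 := by
    have h2 := hsplit
    rw [hcomp, card_P, ← hQ] at h2
    omega
  rw [hfold_eq, himg, Finset.card_image_of_injOn hinj, key]
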